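/- If G has m ≥ 2 edges, R_g denotes the geometric mean of the d-radii of the edges of G, and σ denotes the standard deviation of the d-radii, i.e. σ = √((1/m) Σ_{uv ∈ E(G)} (|z_{uv}| − SO(G)/m)²), then SO(G) ≤ m·(R_g + √(m−1)·σ). -/

import Mathlib

open Finset Real

noncomputable def dRad {V : Type*} [Fintype V] (G : SimpleGraph V) [DecidableRel G.Adj]
    (e : Sym2 V) : ℝ :=
  Sym2.lift ⟨fun u v => Real.sqrt ((G.degree u : ℝ) ^ 2 + (G.degree v : ℝ) ^ 2),
    fun u v => by simp [add_comm]⟩ e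

noncomputable def somborIndex {V : Type*} [Fintype V] [DecidableEq V] (G : SimpleGraph V)
    [DecidableRel G.Adj] : ℝ :=
  ∑ e ∈ G.edgeFinset, dRad G e

lemma keyIneq {α : Type*} [DecidableEq α] (s : Finset α) (f : α → ℝ)
    (hf : ∀ a ∈ s, 0 ≤ f a) (m : ℕ) (hm : s.card = m) (h2 : 2 ≤ m) :
    ∑ a ∈ s, f a ≤ (m : ℝ) * ((∏ a ∈ s, f a) ^ ((1 : ℝ) / m)
      + Real.sqrt ((m : ℝ) - 1) *
          Real.sqrt ((1 / m) * ∑ a ∈ s, (f a - (∑ b ∈ s, f b) / m) ^ 2)) := by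
  have hm0 : (0 : ℝ) < m := by
    have : (0 : ℕ) < m := lt_of_lt_of_le two_pos h2
    exact_mod_cast this
  have hmne : (m : ℝ) ≠ 0 := ne_of_gt hm0
  have hs : s.Nonempty := Finset.card_pos.mp (by omega)
  obtain ⟨a₀, ha₀, hmin⟩ := s.exists_min_image f hs
  set A : ℝ := (∑ b ∈ s, f b) / m with hA
  set S : ℝ := ∑ a ∈ s, (f a - A) ^ 2 with hS
  have hSnn : 0 ≤ S := Finset.sum_nonneg fun a _ => sq_nonneg _
  -- Samuelson: (f a₀ - A)^2 ≤ (m-1) * ((1/m) * S)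
  have hsum0 : ∑ a ∈ s, (f a - A) = 0 := by
    rw [Finset.sum_sub_distrib, Finset.sum_const, hm, hA, nsmul_eq_mul]
    field_simp
    ring
  have herase : ∑ a ∈ s.erase a₀, (f a - A) = -(f a₀ - A) := by
    rw [Finset.sum_erase_eq_sub ha₀, hsum0]; ring
  have hcard : (s.erase a₀).card = m - 1 := by rw [Finset.card_erase_of_mem ha₀, hm]
  have hCS := sq_sum_le_card_mul_sum_sq (s := s.erase a₀) (f := fun a => f a - A)
  rw [herase, hcard] at hCS
  have herase2 : ∑ a ∈ s.erase a₀, (f a - A) ^ 2 = S - (f a₀ - A) ^ 2 :=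
    Finset.sum_erase_eq_sub ha₀
  rw [herase2, neg_sq] at hCS
  have hm1 : ((m - 1 : ℕ) : ℝ) = (m : ℝ) - 1 := by
    have : 1 ≤ m := le_trans one_le_two h2
    push_cast [this]; ring
  rw [hm1] at hCS
  have hsam : (f a₀ - A) ^ 2 ≤ ((m : ℝ) - 1) * ((1 / m) * S) := by
    have h1 : (m : ℝ) * (f a₀ - A) ^ 2 ≤ ((m : ℝ) - 1) * S := by nlinarith [sq_nonneg (f a₀ - A)]
    rw [show ((m : ℝ) - 1) * ((1 / m) * S) = ((m : ℝ) - 1) * S / m by ring, le_div_iff₀ hm0]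
    nlinarith
  have hdev : A - f a₀ ≤ Real.sqrt ((m : ℝ) - 1) *
      Real.sqrt ((1 / m) * S) := by
    have h3 : A - f a₀ ≤ Real.sqrt ((f a₀ - A) ^ 2) := by
      rw [Real.sqrt_sq_eq_abs]
      have := neg_abs_le (f a₀ - A)
      linarith [abs_nonneg (f a₀ - A)]
    calc A - f a₀ ≤ Real.sqrt ((f a₀ - A) ^ 2) := h3
      _ ≤ Real.sqrt (((m : ℝ) - 1) * ((1 / m) * S)) := Real.sqrt_le_sqrt hsam
      _ = Real.sqrt ((m : ℝ) - 1) * Real.sqrt ((1 / m) * S) := by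
          rw [Real.sqrt_mul (by linarith : (0:ℝ) ≤ (m : ℝ) - 1)]
  -- geometric mean ≥ min
  have hgeo : f a₀ ≤ (∏ a ∈ s, f a) ^ ((1 : ℝ) / m) := by
    have hprod : f a₀ ^ m ≤ ∏ a ∈ s, f a := by
      calc f a₀ ^ m = ∏ _a ∈ s, f a₀ := by rw [Finset.prod_const, hm]
        _ ≤ ∏ a ∈ s, f a := Finset.prod_le_prod (fun a _ => hf a₀ ha₀) (fun a _ => hmin a ‹_›)
    have h0 : 0 ≤ f a₀ := hf a₀ ha₀
    have : (f a₀ ^ m : ℝ) ^ ((1 : ℝ) / m) ≤ (∏ a ∈ s, f a) ^ ((1 : ℝ) / m) :=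
      Real.rpow_le_rpow (pow_nonneg h0 m) hprod (by positivity)
    calc f a₀ = (f a₀ ^ m : ℝ) ^ ((1 : ℝ) / m) := by
          rw [← Real.rpow_natCast (f a₀) m, ← Real.rpow_mul h0, mul_one_div,
            div_self hmne, Real.rpow_one]
      _ ≤ _ := this
  have hsumA : ∑ a ∈ s, f a = (m : ℝ) * A := by rw [hA]; field_simp
  rw [hsumA]
  have : A ≤ (∏ a ∈ s, f a) ^ ((1 : ℝ) / m) +
      Real.sqrt ((m : ℝ) - 1) * Real.sqrt ((1 / m) * S) := by linarith
  exact mul_le_mul_of_nonneg_left this (le_of_lt hm0)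

lemma dRad_nonneg {V : Type*} [Fintype V] (G : SimpleGraph V) [DecidableRel G.Adj]
    (e : Sym2 V) : 0 ≤ dRad G e := by
  induction e using Sym2.ind with
  | _ u v => exact Real.sqrt_nonneg _

/-- If `G` has `m ≥ 2` edges, `R_g` is the geometric mean of the d-radii and `σ` their standard
deviation, then `SO(G) ≤ m·(R_g + √(m−1)·σ)`. -/
theorem stmt8 {V : Type*} [Fintype V] [DecidableEq V] (G : SimpleGraph V) [DecidableRel G.Adj]
    (m : ℕ) (hm : G.edgeFinset.card = m) (h2 : 2 ≤ m) :
    somborIndex G ≤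
      (m : ℝ) * ((∏ e ∈ G.edgeFinset, dRad G e) ^ ((1 : ℝ) / m)
        + Real.sqrt ((m : ℝ) - 1) *
            Real.sqrt ((1 / m) * ∑ e ∈ G.edgeFinset, (dRad G e - somborIndex G / m) ^ 2)) := by
  have := keyIneq G.edgeFinset (dRad G) (fun e _ => dRad_nonneg G e) m hm h2
  simpa [somborIndex] using this
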